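/- Let D, w*, γ, η be as in the margin-RCN model, let N, T ∈ ℕ, let μ = 2/((1−η)·√(T+1)), and run projected subgradient descent on ĝ_N starting from any w₀ in the unit ball. Then, for every realization of the sample, there exists t ∈ {0, …, T} such that Pr_{x∼D_x}[sign(w_t·x) ≠ sign(w*·x)] ≤ E₁ + E₂ + E₃, where E₁ = 2(1−η)/((1−2η)·γ·√(T+1)), E₂ = (2/((1−2η)·γ))·‖ĝ_N(w*)‖₂, and E₃ = (1/(T+1))·Σ_{t=0}^{T} ( Pr_{x∼D_x}[sign(w_t·x) ≠ sign(w*·x)] − P̂_N(w_t) ). -/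

import Mathlib

open scoped RealInnerProductSpace
open MeasureTheory

/-- `sign(t) = 1` if `t ≥ 0` and `-1` otherwise. -/
noncomputable def sgn (t : ℝ) : ℝ := if 0 ≤ t then 1 else -1

/-- Euclidean projection onto the closed unit ball. -/
noncomputable def projB {d : ℕ} (v : EuclideanSpace ℝ (Fin d)) : EuclideanSpace ℝ (Fin d) :=
  if ‖v‖ ≤ 1 then v else ‖v‖⁻¹ • v

/-- Empirical subgradient `ĝ_N(w) = (1/(2N))·Σᵢ ((1−2η)·sign(w·x⁽ⁱ⁾) − y⁽ⁱ⁾)·x⁽ⁱ⁾`. -/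
noncomputable def hatg {d N : ℕ} (η : ℝ) (S : Fin N → EuclideanSpace ℝ (Fin d) × ℝ)
    (w : EuclideanSpace ℝ (Fin d)) : EuclideanSpace ℝ (Fin d) :=
  (1 / (2 * N) : ℝ) • ∑ i, ((1 - 2 * η) * sgn ⟪w, (S i).1⟫ - (S i).2) • (S i).1

/-- Empirical disagreement `P̂_N(w) = (1/N)·Σᵢ 1{sign(w·x⁽ⁱ⁾) ≠ sign(w*·x⁽ⁱ⁾)}`. -/
noncomputable def hatP {d N : ℕ} (wstar : EuclideanSpace ℝ (Fin d))
    (S : Fin N → EuclideanSpace ℝ (Fin d) × ℝ) (w : EuclideanSpace ℝ (Fin d)) : ℝ :=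
  (1 / N : ℝ) * ∑ i, if sgn ⟪w, (S i).1⟫ ≠ sgn ⟪wstar, (S i).1⟫ then 1 else 0

/-- Disagreement probability `Pr_{x∼D_x}[sign(w·x) ≠ sign(w*·x)]`. -/
noncomputable def disag {d : ℕ} (Dx : Measure (EuclideanSpace ℝ (Fin d)))
    (wstar w : EuclideanSpace ℝ (Fin d)) : ℝ :=
  (Dx {x | sgn ⟪w, x⟫ ≠ sgn ⟪wstar, x⟫}).toReal

lemma sgn_cases (t : ℝ) : sgn t = 1 ∨ sgn t = -1 := by
  unfold sgn; split_ifs <;> simp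

lemma sgn_mul_self (t : ℝ) : sgn t * t = |t| := by
  unfold sgn
  rcases le_or_gt 0 t with h | h
  · rw [if_pos h, abs_of_nonneg h, one_mul]
  · rw [if_neg (not_le.2 h), abs_of_neg h]; ring

lemma norm_projB_le {d : ℕ} (v : EuclideanSpace ℝ (Fin d)) : ‖projB v‖ ≤ 1 := by
  unfold projB
  split_ifs with h
  · exact h
  · push_neg at h
    have hv : ‖v‖ ≠ 0 := by linarith
    rw [norm_smul, norm_inv, norm_norm, inv_mul_cancel₀ hv]

lemma projB_nonexp {d : ℕ} (v u : EuclideanSpace ℝ (Fin d)) (hu : ‖u‖ ≤ 1) :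
    ‖projB v - u‖ ≤ ‖v - u‖ := by
  unfold projB
  split_ifs with h
  · exact le_rfl
  · push_neg at h
    have hv : ‖v‖ ≠ 0 := by linarith
    have hsq : ‖(‖v‖⁻¹ • v) - u‖^2 ≤ ‖v - u‖^2 := by
      rw [norm_sub_sq_real, norm_sub_sq_real, norm_smul, real_inner_smul_left,
        norm_inv, norm_norm]
      have h1 : ⟪v, u⟫ ≤ ‖v‖ * ‖u‖ := real_inner_le_norm v u
      have h2 : ‖v‖ * ‖v‖⁻¹ = 1 := mul_inv_cancel₀ hv
      have h3 : 0 ≤ ‖u‖ := norm_nonneg u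
      have h4 : 0 ≤ ‖v‖⁻¹ := inv_nonneg.2 (norm_nonneg v)
      have hi1 : ‖v‖⁻¹ ≤ 1 := inv_le_one_of_one_le₀ h.le
      have hcr : ⟪v, u⟫ ≤ ‖v‖ := by nlinarith
      nlinarith [sq_nonneg (‖v‖ - 1),
        mul_le_mul_of_nonneg_right hcr (by linarith : (0:ℝ) ≤ 1 - ‖v‖⁻¹)]
    have := Real.sqrt_le_sqrt hsq
    rwa [Real.sqrt_sq (norm_nonneg _), Real.sqrt_sq (norm_nonneg _)] at this

lemma hatg_norm_le {d N : ℕ} (hN : 0 < N) {η : ℝ} (hη0 : 0 < η) (hη1 : η < 1/2)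
    (S : Fin N → EuclideanSpace ℝ (Fin d) × ℝ)
    (hSx : ∀ i, ‖(S i).1‖ = 1) (hSy : ∀ i, (S i).2 = -1 ∨ (S i).2 = 1)
    (w : EuclideanSpace ℝ (Fin d)) : ‖hatg η S w‖ ≤ 1 - η := by
  unfold hatg
  rw [norm_smul]
  have each : ∀ i : Fin N, ‖((1 - 2*η) * sgn ⟪w, (S i).1⟫ - (S i).2) • (S i).1‖ ≤ 2*(1-η) := by
    intro i
    rw [norm_smul, hSx i, mul_one, Real.norm_eq_abs]
    rcases sgn_cases ⟪w, (S i).1⟫ with h | h <;> rcases hSy i with h' | h' <;>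
      rw [h, h'] <;>
      rcases abs_cases ((1 - 2*η) * (1:ℝ) - (-1:ℝ)) with ⟨he, _⟩ | ⟨he, _⟩ <;>
      rcases abs_cases ((1 - 2*η) * (1:ℝ) - (1:ℝ)) with ⟨hf, _⟩ | ⟨hf, _⟩ <;>
      rcases abs_cases ((1 - 2*η) * (-1:ℝ) - (-1:ℝ)) with ⟨hg, _⟩ | ⟨hg, _⟩ <;>
      rcases abs_cases ((1 - 2*η) * (-1:ℝ) - (1:ℝ)) with ⟨hh, _⟩ | ⟨hh, _⟩ <;>
      simp only [he, hf, hg, hh] <;> linarith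
  have hsum : ‖∑ i : Fin N, ((1 - 2*η) * sgn ⟪w, (S i).1⟫ - (S i).2) • (S i).1‖
      ≤ ∑ i : Fin N, (2*(1-η)) := by
    refine le_trans (norm_sum_le _ _) (Finset.sum_le_sum fun i _ => each i)
  rw [Finset.sum_const, Finset.card_univ, Fintype.card_fin, nsmul_eq_mul] at hsum
  have hN' : (0:ℝ) < N := by exact_mod_cast hN
  have hnn : ‖(1 / (2 * (N:ℝ)))‖ = 1/(2*(N:ℝ)) := by
    rw [Real.norm_eq_abs, abs_of_pos (by positivity)]
  rw [hnn]
  calc 1/(2*(N:ℝ)) * ‖∑ i : Fin N, ((1 - 2*η) * sgn ⟪w, (S i).1⟫ - (S i).2) • (S i).1‖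
      ≤ 1/(2*(N:ℝ)) * ((N:ℝ) * (2*(1-η))) := by
        apply mul_le_mul_of_nonneg_left hsum (by positivity)
    _ = 1 - η := by field_simp

lemma keyC {d N : ℕ} (hN : 0 < N) {γ η : ℝ} (hγ0 : 0 < γ) (hη1 : η < 1/2)
    (wstar : EuclideanSpace ℝ (Fin d))
    (S : Fin N → EuclideanSpace ℝ (Fin d) × ℝ)
    (hSm : ∀ i, γ ≤ |⟪wstar, (S i).1⟫|)
    (w : EuclideanSpace ℝ (Fin d)) :
    (1 - 2*η) * γ * hatP wstar S w ≤ ⟪hatg η S w - hatg η S wstar, w - wstar⟫ := by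
  have hN' : (0:ℝ) < N := by exact_mod_cast hN
  have hdiff : hatg η S w - hatg η S wstar
      = (1/(2*N):ℝ) • ∑ i, ((1 - 2*η) * (sgn ⟪w, (S i).1⟫ - sgn ⟪wstar, (S i).1⟫)) • (S i).1 := by
    unfold hatg
    rw [← smul_sub, ← Finset.sum_sub_distrib]
    congr 1
    refine Finset.sum_congr rfl fun i _ => ?_
    rw [← sub_smul]
    congr 1
    ring
  rw [hdiff, real_inner_smul_left, sum_inner]
  unfold hatP
  have lhs_eq : (1 - 2*η) * γ * ((1/(N:ℝ)) * ∑ i, if sgn ⟪w, (S i).1⟫ ≠ sgn ⟪wstar, (S i).1⟫ then (1:ℝ) else 0)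
      = ∑ i, (1 - 2*η) * γ * (1/(N:ℝ)) * (if sgn ⟪w, (S i).1⟫ ≠ sgn ⟪wstar, (S i).1⟫ then (1:ℝ) else 0) := by
    simp only [Finset.mul_sum]
    exact Finset.sum_congr rfl fun i _ => by ring
  rw [lhs_eq, Finset.mul_sum]
  apply Finset.sum_le_sum
  intro i _
  rw [real_inner_smul_left, inner_sub_right, real_inner_comm w (S i).1,
    real_inner_comm wstar (S i).1]
  set a := ⟪w, (S i).1⟫ with ha
  set b := ⟪wstar, (S i).1⟫ with hb
  by_cases hab : sgn a = sgn b
  · rw [if_neg (not_not_intro hab), hab]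
    simp
  · rw [if_pos hab]
    have hs : sgn a = - sgn b := by
      rcases sgn_cases a with h | h <;> rcases sgn_cases b with h' | h' <;>
        simp [h, h'] at hab ⊢
    have h1 : sgn a * a = |a| := sgn_mul_self a
    have h2 : sgn b * b = |b| := sgn_mul_self b
    have h3 : γ ≤ |b| := hSm i
    have h4 : 0 ≤ |a| := abs_nonneg a
    have e1 : sgn a * b = -(sgn b * b) := by rw [hs]; ring
    have e2 : sgn b * a = -(sgn a * a) := by rw [hs]; ring
    have hineq : 2*γ ≤ (sgn a - sgn b) * (a - b) := by nlinarith [h1, h2, h3, h4, e1, e2]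
    have hco : (0:ℝ) ≤ 1/(2*(N:ℝ)) * (1 - 2*η) := by
      apply mul_nonneg (by positivity)
      linarith
    have hmul := mul_le_mul_of_nonneg_left hineq hco
    have e3 : (1-2*η)*γ*(1/(N:ℝ))*(1:ℝ) = 1/(2*(N:ℝ)) * (1-2*η) * (2*γ) := by
      field_simp
    have e4 : 1/(2*(N:ℝ)) * ((1-2*η)*((sgn a - sgn b)*(a-b)))
        = 1/(2*(N:ℝ)) * (1-2*η) * ((sgn a - sgn b)*(a-b)) := by ring
    nlinarith [hmul, e3, e4]

set_option maxHeartbeats 1000000 in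
theorem stmt_4 {d : ℕ} (N T : ℕ) (hN : 0 < N) (γ η : ℝ)
    (hγ : γ ∈ Set.Ioo (0 : ℝ) 1) (hη : η ∈ Set.Ioo (0 : ℝ) (1 / 2))
    (wstar : EuclideanSpace ℝ (Fin d)) (hws : ‖wstar‖ = 1)
    (Dx : Measure (EuclideanSpace ℝ (Fin d))) [IsProbabilityMeasure Dx]
    (hsph : ∀ᵐ x ∂Dx, ‖x‖ = 1)
    (hmargin : Dx {x | |⟪wstar, x⟫| < γ} = 0)
    (S : Fin N → EuclideanSpace ℝ (Fin d) × ℝ)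
    (hSx : ∀ i, ‖(S i).1‖ = 1)
    (hSy : ∀ i, (S i).2 = -1 ∨ (S i).2 = 1)
    (hSm : ∀ i, γ ≤ |⟪wstar, (S i).1⟫|)
    (μstep : ℝ) (hμ : μstep = 2 / ((1 - η) * Real.sqrt (T + 1)))
    (w : ℕ → EuclideanSpace ℝ (Fin d)) (hw0 : ‖w 0‖ ≤ 1)
    (hiter : ∀ s, w (s + 1) = projB (w s - μstep • hatg η S (w s))) :
    ∃ t ≤ T, disag Dx wstar (w t) ≤
      2 * (1 - η) / ((1 - 2 * η) * γ * Real.sqrt (T + 1)) +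
      (2 / ((1 - 2 * η) * γ)) * ‖hatg η S wstar‖ +
      (1 / (T + 1 : ℝ)) *
        ∑ s ∈ Finset.range (T + 1), (disag Dx wstar (w s) - hatP wstar S (w s)) := by
  obtain ⟨hγ0, hγ1⟩ := hγ
  obtain ⟨hη0, hη1⟩ := hη
  have hc : (0:ℝ) < (1 - 2*η) * γ := by nlinarith
  have hK : (0:ℝ) < (T:ℝ) + 1 := by positivity
  set sq : ℝ := Real.sqrt ((T:ℝ) + 1) with hsq
  have hs0 : 0 < sq := Real.sqrt_pos.2 hK
  have hs2 : sq^2 = (T:ℝ) + 1 := Real.sq_sqrt hK.le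
  have h1η : (0:ℝ) < 1 - η := by linarith
  have hμpos : 0 < μstep := by
    rw [hμ]; exact div_pos (by norm_num) (mul_pos h1η hs0)
  have hne : (1 - η) * sq ≠ 0 := ne_of_gt (mul_pos h1η hs0)
  have hμs : μstep * ((1 - η) * sq) = 2 := by
    rw [hμ, div_mul_cancel₀ _ hne]
  -- iterates stay in the ball
  have hwle : ∀ s, ‖w s‖ ≤ 1 := by
    intro s
    induction s with
    | zero => exact hw0
    | succ n _ => rw [hiter]; exact norm_projB_le _
  have hwd : ∀ s, ‖w s - wstar‖ ≤ 2 := by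
    intro s
    calc ‖w s - wstar‖ ≤ ‖w s‖ + ‖wstar‖ := norm_sub_le _ _
      _ ≤ 2 := by rw [hws]; linarith [hwle s]
  have hGnorm : ∀ v, ‖hatg η S v‖ ≤ 1 - η := fun v =>
    hatg_norm_le hN hη0 hη1 S hSx hSy v
  set f : ℕ → ℝ := fun s => ‖w s - wstar‖^2 with hf
  set G : ℕ → ℝ := fun s => ⟪hatg η S (w s), w s - wstar⟫ with hG
  -- one-step descent
  have hstep : ∀ s, f (s+1) ≤ f s - 2*μstep*G s + μstep^2*(1-η)^2 := by
    intro s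
    have h1 : ‖w (s+1) - wstar‖ ≤ ‖(w s - μstep • hatg η S (w s)) - wstar‖ := by
      rw [hiter]
      exact projB_nonexp _ _ (le_of_eq hws)
    have h1' : ‖w (s+1) - wstar‖^2 ≤ ‖(w s - μstep • hatg η S (w s)) - wstar‖^2 :=
      pow_le_pow_left₀ (norm_nonneg _) h1 2
    have h2 : ‖(w s - μstep • hatg η S (w s)) - wstar‖^2
        = ‖w s - wstar‖^2 - 2*μstep*G s + μstep^2*‖hatg η S (w s)‖^2 := by
      have e : (w s - μstep • hatg η S (w s)) - wstar
          = (w s - wstar) - μstep • hatg η S (w s) := by abel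
      rw [e, norm_sub_sq_real, real_inner_smul_right, norm_smul, Real.norm_eq_abs,
        mul_pow, sq_abs, real_inner_comm]
      simp only [hG]
      ring
    have h3 : ‖hatg η S (w s)‖^2 ≤ (1-η)^2 := by
      have := hGnorm (w s)
      nlinarith [norm_nonneg (hatg η S (w s))]
    have h4 : 0 ≤ μstep^2 := sq_nonneg _
    simp only [hf]
    nlinarith [h1', h2, h3, h4]
  -- telescoped bound on sum of G
  have htel : ∑ s ∈ Finset.range (T+1), (2*μstep*G s)
      ≤ 4 + ((T:ℝ)+1) * (μstep^2*(1-η)^2) := by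
    have hsum : ∑ s ∈ Finset.range (T+1), (2*μstep*G s)
        ≤ ∑ s ∈ Finset.range (T+1), ((f s - f (s+1)) + μstep^2*(1-η)^2) :=
      Finset.sum_le_sum fun s _ => by linarith [hstep s]
    rw [Finset.sum_add_distrib, Finset.sum_range_sub' f, Finset.sum_const,
      Finset.card_range, nsmul_eq_mul] at hsum
    have hf0 : f 0 ≤ 4 := by
      simp only [hf]
      nlinarith [hwd 0, norm_nonneg (w 0 - wstar)]
    have hfT : 0 ≤ f (T+1) := by simp only [hf]; positivity
    push_cast at hsum
    linarith
  have hGsum : ∑ s ∈ Finset.range (T+1), G s ≤ 2*(1-η)*sq := by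
    have hK4 : ((T:ℝ)+1) * (μstep^2*(1-η)^2) = 4 := by
      have h5 : (μstep * ((1 - η) * sq))^2 = 4 := by rw [hμs]; norm_num
      nlinarith [hs2, h5]
    have h6 : 2*μstep * (∑ s ∈ Finset.range (T+1), G s) ≤ 8 := by
      rw [Finset.mul_sum]
      calc ∑ s ∈ Finset.range (T+1), 2*μstep*G s ≤ 4 + ((T:ℝ)+1) * (μstep^2*(1-η)^2) := htel
        _ = 8 := by rw [hK4]; norm_num
    nlinarith [h6, hμs, hμpos]
  -- per-step empirical disagreement bound
  have hk : ∀ s, (1 - 2*η)*γ * hatP wstar S (w s) ≤ G s + 2*‖hatg η S wstar‖ := by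
    intro s
    have h1 := keyC hN hγ0 hη1 wstar S hSm (w s)
    have h2 : ⟪hatg η S (w s) - hatg η S wstar, w s - wstar⟫
        = G s - ⟪hatg η S wstar, w s - wstar⟫ := by
      rw [inner_sub_left]
    have h3 : |⟪hatg η S wstar, w s - wstar⟫| ≤ ‖hatg η S wstar‖ * ‖w s - wstar‖ :=
      abs_real_inner_le_norm _ _
    have h4 : ‖hatg η S wstar‖ * ‖w s - wstar‖ ≤ ‖hatg η S wstar‖ * 2 :=
      mul_le_mul_of_nonneg_left (hwd s) (norm_nonneg _)
    have h5 := neg_abs_le ⟪hatg η S wstar, w s - wstar⟫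
    linarith [h1, h2.symm ▸ h1]
  have hPsum : (1 - 2*η)*γ * ∑ s ∈ Finset.range (T+1), hatP wstar S (w s)
      ≤ 2*(1-η)*sq + ((T:ℝ)+1) * (2*‖hatg η S wstar‖) := by
    have : ∑ s ∈ Finset.range (T+1), ((1 - 2*η)*γ * hatP wstar S (w s))
        ≤ ∑ s ∈ Finset.range (T+1), (G s + 2*‖hatg η S wstar‖) :=
      Finset.sum_le_sum fun s _ => hk s
    rw [Finset.sum_add_distrib, Finset.sum_const, Finset.card_range, nsmul_eq_mul] at this
    rw [Finset.mul_sum]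
    push_cast at this
    linarith [hGsum]
  -- choose the minimizing iterate
  obtain ⟨t, htmem, htmin⟩ := Finset.exists_min_image (Finset.range (T+1))
    (fun s => disag Dx wstar (w s)) ⟨0, Finset.mem_range.2 (Nat.succ_pos T)⟩
  refine ⟨t, Nat.lt_succ_iff.mp (Finset.mem_range.mp htmem), ?_⟩
  set A := ∑ s ∈ Finset.range (T+1), disag Dx wstar (w s) with hA
  set P := ∑ s ∈ Finset.range (T+1), hatP wstar S (w s) with hP
  have hmin : ((T:ℝ)+1) * disag Dx wstar (w t) ≤ A := by
    calc ((T:ℝ)+1) * disag Dx wstar (w t)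
        = ∑ _s ∈ Finset.range (T+1), disag Dx wstar (w t) := by
          rw [Finset.sum_const, Finset.card_range, nsmul_eq_mul]; push_cast; ring
      _ ≤ A := Finset.sum_le_sum fun s hs => htmin s hs
  set gs := ‖hatg η S wstar‖ with hgs
  have hgs0 : 0 ≤ gs := norm_nonneg _
  have hE : ((1 - 2*η)*γ) * (((T:ℝ)+1) *
      (2 * (1 - η) / ((1 - 2 * η) * γ * sq) + (2 / ((1 - 2 * η) * γ)) * gs))
      = 2*(1-η)*sq + ((T:ℝ)+1) * (2*gs) := by
    rw [← hs2]
    have h12 : (1:ℝ) - 2*η ≠ 0 := ne_of_gt (by linarith)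
    field_simp
  have hPE : P ≤ ((T:ℝ)+1) *
      (2 * (1 - η) / ((1 - 2 * η) * γ * sq) + (2 / ((1 - 2 * η) * γ)) * gs) := by
    have := hPsum
    nlinarith [hPsum, hE, hc]
  have hsplit : ∑ s ∈ Finset.range (T+1), (disag Dx wstar (w s) - hatP wstar S (w s))
      = A - P := by
    rw [Finset.sum_sub_distrib]
  rw [hsplit]
  have hfin : ((T:ℝ)+1) * disag Dx wstar (w t)
      ≤ ((T:ℝ)+1) * (2 * (1 - η) / ((1 - 2 * η) * γ * sq) + (2 / ((1 - 2 * η) * γ)) * gs)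
        + (A - P) := by linarith
  have hdiv : disag Dx wstar (w t)
      ≤ (2 * (1 - η) / ((1 - 2 * η) * γ * sq) + (2 / ((1 - 2 * η) * γ)) * gs)
        + (1/((T:ℝ)+1)) * (A - P) := by
    rw [← mul_le_mul_iff_right₀ hK]
    calc ((T:ℝ)+1) * disag Dx wstar (w t)
        ≤ ((T:ℝ)+1) * (2 * (1 - η) / ((1 - 2 * η) * γ * sq) + (2 / ((1 - 2 * η) * γ)) * gs)
          + (A - P) := hfin
      _ = ((T:ℝ)+1) * ((2 * (1 - η) / ((1 - 2 * η) * γ * sq) + (2 / ((1 - 2 * η) * γ)) * gs)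
          + (1/((T:ℝ)+1)) * (A - P)) := by
        field_simp
  calc disag Dx wstar (w t)
      ≤ (2 * (1 - η) / ((1 - 2 * η) * γ * sq) + (2 / ((1 - 2 * η) * γ)) * gs)
        + (1/((T:ℝ)+1)) * (A - P) := hdiv
    _ = 2 * (1 - η) / ((1 - 2 * η) * γ * sq) + (2 / ((1 - 2 * η) * γ)) * gs
        + (1/((T:ℝ)+1)) * (A - P) := by ring
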